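/- If a single-factor model holds, i.e., each observed variable satisfies Xᵢ = λᵢF + εᵢ with F and all εᵢ uncorrelated and unit-variance F, then Corr(Xᵢ, Xⱼ) · Corr(Xₖ, Xₗ) = Corr(Xᵢ, Xₗ) · Corr(Xₖ, Xⱼ) for all distinct indices i, j, k, l (the tetrad condition). -/

import Mathlib

open RealInnerProductSpace

/-- Tetrad condition: if each observed variable satisfies `Xᵢ = λᵢ F + εᵢ` with
`F` unit-variance, errors mutually uncorrelated and uncorrelated with `F`, and
each `Xᵢ` has positive variance, then
`Corr(Xᵢ,Xⱼ)·Corr(Xₖ,Xₗ) = Corr(Xᵢ,Xₗ)·Corr(Xₖ,Xⱼ)` for distinct `i,j,k,l`. -/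
theorem tetrad_condition
    {E : Type*} [NormedAddCommGroup E] [InnerProductSpace ℝ E]
    {n : ℕ} (hn : 4 ≤ n)
    (X : Fin n → E) (lam : Fin n → ℝ) (F : E) (ε : Fin n → E)
    (hF : ‖F‖ = 1)
    (hmodel : ∀ i, X i = lam i • F + ε i)
    (herr : ∀ i j, i ≠ j → ⟪ε i, ε j⟫ = 0)
    (herrF : ∀ i, ⟪F, ε i⟫ = 0)
    (hvar : ∀ i, 0 < ‖X i‖) :
    ∀ i j k l : Fin n, i ≠ j → i ≠ k → i ≠ l → j ≠ k → j ≠ l → k ≠ l →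
      (⟪X i, X j⟫ / (‖X i‖ * ‖X j‖)) * (⟪X k, X l⟫ / (‖X k‖ * ‖X l‖)) =
      (⟪X i, X l⟫ / (‖X i‖ * ‖X l‖)) * (⟪X k, X j⟫ / (‖X k‖ * ‖X j‖)) := by
  have hFF : ⟪F, F⟫ = 1 := by
    rw [real_inner_self_eq_norm_sq, hF]; norm_num
  have key : ∀ i j : Fin n, i ≠ j → ⟪X i, X j⟫ = lam i * lam j := by
    intro i j hij
    rw [hmodel i, hmodel j]
    have h2 : ⟪ε i, F⟫ = 0 := by rw [real_inner_comm]; exact herrF i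
    simp [inner_add_left, inner_add_right, real_inner_smul_left,
      real_inner_smul_right, hFF, hF, herrF, herr i j hij, h2, mul_comm]
  intro i j k l hij hik hil hjk hjl hkl
  rw [key i j hij, key k l hkl, key i l hil, key k j hjk.symm]
  field_simp
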